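/- Let (Ω, F, P) be a probability space and n ≥ 1, m ≥ 2. Let X_i : Ω → ℝ^m and Q_i : Ω → ℝ for i = 1,…,n be such that the pairs (X_i, Q_i) are i.i.d., X_1 is independent of Q_1, and Q_1 is uniformly distributed on [0,1]. Suppose there are constants a, b > 0 with P(|X_1^{(j)}| > t) ≤ a·e^{−bt²} for all t > 0 and all j = 1,…,m, and that min over j of E[(X_1^{(j)})²] ≥ σ² for some σ² > 0. Fix t₀ ∈ (0,1) and set r = σ²·t₀. Then there exists a constant c' > 0 depending only on a, b, σ² and t₀ such that P( min over j = 1,…,m of (1/n)·Σ_{i=1}^n (X_i^{(j)})²·1{Q_i < t₀} ≤ r/2 ) ≤ 2m·e^{−c'·n}. -/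

import Mathlib

open MeasureTheory ProbabilityTheory Set

lemma aux_convex {M lam w : ℝ} (hM : 0 < M) (hw0 : 0 ≤ w) (hwM : w ≤ M) :
    Real.exp (-lam * w) ≤ 1 + (Real.exp (-lam * M) - 1) * (w / M) := by
  have hθ0 : 0 ≤ w / M := div_nonneg hw0 hM.le
  have hθ1 : w / M ≤ 1 := (div_le_one hM).mpr hwM
  have h := convexOn_exp.2 (Set.mem_univ (0:ℝ)) (Set.mem_univ (-lam * M))
    (by linarith : (0:ℝ) ≤ 1 - w/M) hθ0 (by ring)
  have harg : (1 - w/M) • (0:ℝ) + (w/M) • (-lam * M) = -lam * w := by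
    simp only [smul_eq_mul, mul_zero, zero_add]
    rw [div_mul_eq_mul_div, div_eq_iff hM.ne']
    ring
  rw [harg] at h
  simp only [smul_eq_mul, Real.exp_zero] at h
  have hring : (1 - w/M) * 1 + (w/M) * Real.exp (-lam * M)
      = 1 + (Real.exp (-lam * M) - 1) * (w / M) := by ring
  linarith

lemma aux_exp_int (b : ℝ) (hb : 0 < b) : ∫ t in Ioi (0:ℝ), Real.exp (-b * t) = 1/b := by
  have h := integral_comp_mul_left_Ioi (fun u => Real.exp (-u)) 0 hb
  simp only [mul_zero, integral_exp_neg_Ioi, neg_zero, Real.exp_zero, smul_eq_mul, mul_one] at h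
  rw [show (fun x => Real.exp (-(b*x))) = fun x => Real.exp (-b*x) by ext x; ring_nf] at h
  rw [h]; ring

set_option maxHeartbeats 1000000 in
/-- second claim of Lemma 3 of the paper: under i.i.d. sampling, with X₁
independent of Q₁, Q₁ uniform on [0,1], uniformly subgaussian coordinates, and
min_j E[(X₁⁽ʲ⁾)²] ≥ σ², setting r = σ²t₀, there is c' > 0 depending only on a, b, σ², t₀
with P( min_j (1/n)Σᵢ (Xᵢ⁽ʲ⁾)²1{Qᵢ<t₀} ≤ r/2 ) ≤ 2m·exp(−c'n). -/
theorem stmt_13 (a b sigSq t₀ : ℝ) (ha : 0 < a) (hb : 0 < b)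
    (hsig : 0 < sigSq) (ht₀0 : 0 < t₀) (ht₀1 : t₀ < 1) :
    ∃ c' : ℝ, 0 < c' ∧
      ∀ (n m : ℕ) (hn : 1 ≤ n), 2 ≤ m →
      ∀ (Ω : Type) [MeasurableSpace Ω] (P : Measure Ω), IsProbabilityMeasure P →
      ∀ (X : Fin n → Ω → Fin m → ℝ) (Q : Fin n → Ω → ℝ),
        (∀ i, Measurable (X i)) → (∀ i, Measurable (Q i)) →
        iIndepFun (fun i ω => (X i ω, Q i ω)) P →
        (∀ i : Fin n, IdentDistrib (fun ω => (X i ω, Q i ω))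
            (fun ω => (X ⟨0, hn⟩ ω, Q ⟨0, hn⟩ ω)) P P) →
        IndepFun (X ⟨0, hn⟩) (Q ⟨0, hn⟩) P →
        Measure.map (Q ⟨0, hn⟩) P = volume.restrict (Set.Icc (0 : ℝ) 1) →
        (∀ j : Fin m, ∀ t : ℝ, 0 < t →
          P {ω | t < |X ⟨0, hn⟩ ω j|} ≤ ENNReal.ofReal (a * Real.exp (-b * t ^ 2))) →
        (∀ j : Fin m, sigSq ≤ ∫ ω, (X ⟨0, hn⟩ ω j) ^ 2 ∂P) →
        P {ω | ∃ j : Fin m,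
              (1 / (n : ℝ)) * ∑ i, (X i ω j) ^ 2 * (if Q i ω < t₀ then 1 else 0)
                ≤ sigSq * t₀ / 2}
          ≤ ENNReal.ofReal (2 * m * Real.exp (-c' * n)) := by
  classical
  set M : ℝ := max 1 (Real.log (4 * a / (b * sigSq)) / b) with hMdef
  have hM1 : (1:ℝ) ≤ M := le_max_left _ _
  have hM0 : (0:ℝ) < M := lt_of_lt_of_le one_pos hM1
  set lam : ℝ := Real.log 2 / M with hlamdef
  have hlam0 : 0 < lam := div_pos (Real.log_pos one_lt_two) hM0
  have hlamM : Real.exp (-lam * M) = 1/2 := by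
    have h1 : -lam * M = -Real.log 2 := by
      rw [hlamdef]; field_simp
    rw [h1, Real.exp_neg, Real.exp_log two_pos]
    norm_num
  set r : ℝ := sigSq * t₀ with hrdef
  have hr0 : 0 < r := mul_pos hsig ht₀0
  have hlog2 : Real.log 2 < 0.6931471808 := Real.log_two_lt_d9
  set c' : ℝ := r * (3 - 4 * Real.log 2) / (8 * M) with hc'def
  have hc'pos : 0 < c' := by
    apply div_pos (mul_pos hr0 (by norm_num at hlog2 ⊢; linarith)) (by linarith)
  refine ⟨c', hc'pos, ?_⟩
  intro n m hn hm Ω mΩ P hP X Q hX hQ hIndep hIdent hXQ hQmap htail hmom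
  haveI := hP
  set x0 : Fin n := ⟨0, hn⟩ with hx0def
  have hnpos : (0:ℝ) < n := by exact_mod_cast Nat.lt_of_lt_of_le Nat.zero_lt_one hn
  -- truncated variables
  set φ : Fin m → (Fin m → ℝ) × ℝ → ℝ :=
    fun j p => min ((p.1 j)^2) M * (if p.2 < t₀ then 1 else 0) with hφdef
  have hφmeas : ∀ j, Measurable (φ j) := by
    intro j
    apply Measurable.mul
    · exact (((measurable_pi_apply j).comp measurable_fst).pow_const 2).min measurable_const
    · exact Measurable.ite (measurableSet_lt measurable_snd measurable_const)
        measurable_const measurable_const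
  set W : Fin m → Fin n → Ω → ℝ := fun j i ω => φ j (X i ω, Q i ω) with hWdef
  have hWmeas : ∀ j i, Measurable (W j i) :=
    fun j i => (hφmeas j).comp ((hX i).prodMk (hQ i))
  have hind01 : ∀ (q : ℝ), 0 ≤ (if q < t₀ then (1:ℝ) else 0) ∧ (if q < t₀ then (1:ℝ) else 0) ≤ 1 := by
    intro q; constructor <;> split <;> norm_num
  have hW0 : ∀ j i ω, 0 ≤ W j i ω := by
    intro j i ω
    exact mul_nonneg (le_min (sq_nonneg _) hM0.le) (hind01 _).1
  have hWM : ∀ j i ω, W j i ω ≤ M := by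
    intro j i ω
    calc W j i ω ≤ M * 1 := by
          exact mul_le_mul (min_le_right _ _) (hind01 _).2 (hind01 _).1 hM0.le
      _ = M := mul_one M
  have hWle : ∀ j i ω, W j i ω ≤ (X i ω j)^2 * (if Q i ω < t₀ then 1 else 0) :=
    fun j i ω => mul_le_mul_of_nonneg_right (min_le_left _ _) (hind01 _).1
  have hW_int : ∀ j i, Integrable (W j i) P := by
    intro j i
    refine (integrable_const M).mono' (hWmeas j i).aestronglyMeasurable ?_
    exact ae_of_all _ fun ω => by
      rw [Real.norm_eq_abs, abs_of_nonneg (hW0 j i ω)]; exact hWM j i ω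
  -- the key per-coordinate bound
  have key : ∀ j : Fin m,
      P {ω | (1 / (n : ℝ)) * ∑ i, (X i ω j) ^ 2 * (if Q i ω < t₀ then 1 else 0)
          ≤ sigSq * t₀ / 2} ≤ ENNReal.ofReal (Real.exp (-c' * n)) := by
    intro j
    -- integrability of X², tail of truncation
    have hXsq_int : Integrable (fun ω => (X x0 ω j)^2) P := by
      by_contra hni
      have h0 := integral_undef hni
      have := hmom j
      rw [h0] at this
      linarith
    set g : Ω → ℝ := fun ω => max ((X x0 ω j)^2 - M) 0 with hgdef
    have hg_meas : Measurable g :=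
      ((((measurable_pi_apply j).comp (hX x0)).pow_const 2).sub measurable_const).max
        measurable_const
    have hg_le : ∀ ω, g ω ≤ (X x0 ω j)^2 :=
      fun ω => max_le (by linarith [hM0]) (sq_nonneg _)
    have hg_int : Integrable g P := by
      refine hXsq_int.mono' hg_meas.aestronglyMeasurable ?_
      exact ae_of_all _ fun ω => by
        rw [Real.norm_eq_abs, abs_of_nonneg (le_max_right _ _)]; exact hg_le ω
    -- tail bound for g via layer cake
    have hgtail : ∀ t : ℝ, 0 < t →
        (P {ω | t < g ω}).toReal ≤ a * Real.exp (-b * M) * Real.exp (-b * t) := by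
      intro t ht
      have hMt : (0:ℝ) < M + t := by linarith
      have hset : {ω | t < g ω} = {ω | Real.sqrt (M + t) < |X x0 ω j|} := by
        ext ω
        simp only [mem_setOf_eq, hgdef, lt_max_iff]
        constructor
        · rintro (h | h)
          · have h2 : M + t < (X x0 ω j)^2 := by linarith
            have := Real.sqrt_lt_sqrt hMt.le h2
            rwa [Real.sqrt_sq_eq_abs] at this
          · linarith
        · intro h
          left
          have h2 : Real.sqrt (M + t) ^ 2 < |X x0 ω j| ^ 2 := by
            apply pow_lt_pow_left₀ h (Real.sqrt_nonneg _)
            norm_num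
          rw [Real.sq_sqrt hMt.le, sq_abs] at h2
          linarith
      rw [hset]
      have hsp : 0 < Real.sqrt (M + t) := Real.sqrt_pos.mpr hMt
      have h3 := htail j _ hsp
      rw [Real.sq_sqrt hMt.le] at h3
      have h4 : a * Real.exp (-b * (M + t)) = a * Real.exp (-b*M) * Real.exp (-b*t) := by
        rw [mul_assoc, ← Real.exp_add]; ring_nf
      rw [h4] at h3
      exact ENNReal.toReal_le_of_le_ofReal (by positivity) h3
    have hg_bound : ∫ ω, g ω ∂P ≤ sigSq / 4 := by
      rw [hg_int.integral_eq_integral_meas_lt (ae_of_all _ fun ω => le_max_right _ _)]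
      have hInt2 : IntegrableOn (fun t => a * Real.exp (-b*M) * Real.exp (-b * t)) (Ioi 0) := by
        exact (exp_neg_integrableOn_Ioi 0 hb).const_mul _
      have hmono : ∫ t in Ioi (0:ℝ), (P {ω | t < g ω}).toReal
          ≤ ∫ t in Ioi (0:ℝ), a * Real.exp (-b*M) * Real.exp (-b * t) := by
        refine integral_mono_of_nonneg (ae_of_all _ fun t => ENNReal.toReal_nonneg) hInt2 ?_
        rw [Filter.EventuallyLE, ae_restrict_iff' measurableSet_Ioi]
        exact ae_of_all _ fun t ht => hgtail t ht
      refine hmono.trans ?_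
      rw [integral_const_mul, aux_exp_int b hb]
      -- a * exp(-b*M) * (1/b) ≤ sigSq/4
      have hbM : Real.log (4*a/(b*sigSq)) ≤ b * M := by
        have h1 : Real.log (4*a/(b*sigSq)) / b ≤ M := le_max_right _ _
        calc Real.log (4*a/(b*sigSq)) = (Real.log (4*a/(b*sigSq)) / b) * b := by field_simp
          _ ≤ M * b := mul_le_mul_of_nonneg_right h1 hb.le
          _ = b * M := mul_comm _ _
      have h2 : Real.exp (-b*M) ≤ b*sigSq/(4*a) := by
        have h1 : Real.exp (-(b*M)) ≤ Real.exp (-Real.log (4*a/(b*sigSq))) :=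
          Real.exp_le_exp.mpr (by linarith)
        rw [Real.exp_neg, Real.exp_neg, Real.exp_log (by positivity), inv_div] at h1
        rw [neg_mul, Real.exp_neg]
        exact h1
      calc a * Real.exp (-b*M) * (1/b) ≤ a * (b*sigSq/(4*a)) * (1/b) := by
            have := mul_le_mul_of_nonneg_left h2 ha.le
            exact mul_le_mul_of_nonneg_right this (by positivity)
        _ = sigSq / 4 := by field_simp
    -- expectation of truncated square
    have hmin_eq : (fun ω => min ((X x0 ω j)^2) M) = fun ω => (X x0 ω j)^2 - g ω := by
      funext ω
      rcases le_total ((X x0 ω j)^2) M with h | h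
      · rw [min_eq_left h, hgdef]
        simp only
        rw [max_eq_right (by linarith)]
        ring
      · rw [min_eq_right h, hgdef]
        simp only
        rw [max_eq_left (by linarith)]
        ring
    have hmin_int : Integrable (fun ω => min ((X x0 ω j)^2) M) P := by
      rw [hmin_eq]; exact hXsq_int.sub hg_int
    have hEmin : 3/4 * sigSq ≤ ∫ ω, min ((X x0 ω j)^2) M ∂P := by
      rw [hmin_eq, integral_sub hXsq_int hg_int]
      have := hmom j
      linarith
    -- indicator expectation
    set s : Set Ω := (Q x0) ⁻¹' (Iio t₀) with hsdef
    have hsmeas : MeasurableSet s := hQ x0 measurableSet_Iio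
    have hIndeq : (fun ω => (if Q x0 ω < t₀ then (1:ℝ) else 0))
        = Set.indicator s (fun _ => (1:ℝ)) := by
      funext ω
      simp [hsdef, Set.indicator_apply, Set.mem_preimage, Set.mem_Iio]
    have hInd_int : Integrable (fun ω => (if Q x0 ω < t₀ then (1:ℝ) else 0)) P := by
      rw [hIndeq]; exact (integrable_const (1:ℝ)).indicator hsmeas
    have hPs : P s = ENNReal.ofReal t₀ := by
      rw [hsdef, ← Measure.map_apply (hQ x0) measurableSet_Iio, hQmap,
        Measure.restrict_apply measurableSet_Iio]
      have hseteq : Iio t₀ ∩ Icc (0:ℝ) 1 = Ico 0 t₀ := by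
        ext x
        simp only [mem_inter_iff, mem_Iio, mem_Icc, mem_Ico]
        constructor
        · rintro ⟨h1, h2, h3⟩; exact ⟨h2, h1⟩
        · rintro ⟨h1, h2⟩; exact ⟨h2, h1, by linarith⟩
      rw [hseteq, Real.volume_Ico]
      norm_num
    have hEInd : ∫ ω, (if Q x0 ω < t₀ then (1:ℝ) else 0) ∂P = t₀ := by
      rw [hIndeq, integral_indicator_const _ hsmeas, measureReal_def, hPs, smul_eq_mul, mul_one,
        ENNReal.toReal_ofReal ht₀0.le]
    -- expectation of W at x0
    have hEW : ∫ ω, W j x0 ω ∂P = (∫ ω, min ((X x0 ω j)^2) M ∂P) * t₀ := by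
      have hfmeas : Measurable (fun x : Fin m → ℝ => min ((x j)^2) M) :=
        ((measurable_pi_apply j).pow_const 2).min measurable_const
      have hgmeas : Measurable (fun q : ℝ => if q < t₀ then (1:ℝ) else 0) :=
        Measurable.ite (measurableSet_lt measurable_id measurable_const)
          measurable_const measurable_const
      have hindep2 : IndepFun (fun ω => min ((X x0 ω j)^2) M)
          (fun ω => if Q x0 ω < t₀ then (1:ℝ) else 0) P := hXQ.comp hfmeas hgmeas
      have h5 := hindep2.integral_fun_mul_eq_mul_integral hmin_int.aestronglyMeasurable hInd_int.aestronglyMeasurable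
      rw [← hEInd]
      exact h5
    have hEWge : 3/4 * r ≤ ∫ ω, W j x0 ω ∂P := by
      rw [hEW, hrdef]
      calc 3/4 * (sigSq * t₀) = (3/4 * sigSq) * t₀ := by ring
        _ ≤ (∫ ω, min ((X x0 ω j)^2) M ∂P) * t₀ :=
          mul_le_mul_of_nonneg_right hEmin ht₀0.le
    -- mgf bound at x0
    have hmgf0 : mgf (W j x0) P (-lam) ≤ Real.exp (-(3*r/(8*M))) := by
      have hptwise : ∀ ω, Real.exp (-lam * W j x0 ω) ≤ 1 - W j x0 ω / (2*M) := by
        intro ω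
        have h1 := aux_convex (lam := lam) hM0 (hW0 j x0 ω) (hWM j x0 ω)
        rw [hlamM] at h1
        have h2 : 1 + (1/2 - 1) * (W j x0 ω / M) = 1 - W j x0 ω / (2*M) := by ring
        linarith
      have hexp_int : Integrable (fun ω => Real.exp (-lam * W j x0 ω)) P := by
        refine (integrable_const (1:ℝ)).mono'
          (((hWmeas j x0).const_mul (-lam)).exp.aestronglyMeasurable) ?_
        refine ae_of_all _ fun ω => ?_
        rw [Real.norm_eq_abs, abs_of_pos (Real.exp_pos _)]
        rw [← Real.exp_zero]
        apply Real.exp_le_exp.mpr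
        have := hW0 j x0 ω
        nlinarith [hlam0]
      have hlin_int : Integrable (fun ω => 1 - W j x0 ω / (2*M)) P :=
        (integrable_const 1).sub ((hW_int j x0).div_const _)
      have h3 : mgf (W j x0) P (-lam) ≤ ∫ ω, (1 - W j x0 ω/(2*M)) ∂P :=
        integral_mono hexp_int hlin_int hptwise
      have h4 : ∫ ω, (1 - W j x0 ω/(2*M)) ∂P = 1 - (∫ ω, W j x0 ω ∂P)/(2*M) := by
        rw [integral_sub (integrable_const 1) ((hW_int j x0).div_const _),
          integral_const, integral_div]
        simp [measure_univ]
      have h5 : 1 - (∫ ω, W j x0 ω ∂P)/(2*M) ≤ Real.exp (-((∫ ω, W j x0 ω ∂P)/(2*M))) := by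
        linarith [Real.add_one_le_exp (-((∫ ω, W j x0 ω ∂P)/(2*M)))]
      have h6 : Real.exp (-((∫ ω, W j x0 ω ∂P)/(2*M))) ≤ Real.exp (-(3*r/(8*M))) := by
        apply Real.exp_le_exp.mpr
        apply neg_le_neg
        rw [div_le_div_iff₀ (by linarith) (by linarith)]
        nlinarith [hEWge]
      calc mgf (W j x0) P (-lam) ≤ ∫ ω, (1 - W j x0 ω/(2*M)) ∂P := h3
        _ = 1 - (∫ ω, W j x0 ω ∂P)/(2*M) := h4
        _ ≤ Real.exp (-((∫ ω, W j x0 ω ∂P)/(2*M))) := h5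
        _ ≤ Real.exp (-(3*r/(8*M))) := h6
    -- identical distribution: same mgf
    have hmgf_i : ∀ i, mgf (W j i) P (-lam) = mgf (W j x0) P (-lam) := by
      intro i
      have h1 : IdentDistrib (W j i) (W j x0) P P := (hIdent i).comp (hφmeas j)
      have h2 : IdentDistrib (fun ω => Real.exp (-lam * W j i ω))
          (fun ω => Real.exp (-lam * W j x0 ω)) P P :=
        h1.comp ((measurable_id.const_mul (-lam)).exp)
      exact h2.integral_eq
    -- independence of the W's
    have hiIndepW : iIndepFun (W j) P :=
      hIndep.comp (fun _ => φ j) (fun _ => hφmeas j)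
    -- Chernoff
    have hS_int : Integrable (fun ω => Real.exp (-lam * (∑ i, W j i) ω)) P := by
      have heq : (fun ω => Real.exp (-lam * (∑ i, W j i) ω))
          = fun ω => Real.exp (-lam * ∑ i, W j i ω) := by
        funext ω; rw [Finset.sum_apply]
      rw [heq]
      refine (integrable_const (1:ℝ)).mono' ?_ ?_
      · exact (((Finset.measurable_sum Finset.univ fun i _ =>
          hWmeas j i).const_mul (-lam)).exp).aestronglyMeasurable
      · refine ae_of_all _ fun ω => ?_
        rw [Real.norm_eq_abs, abs_of_pos (Real.exp_pos _), ← Real.exp_zero]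
        apply Real.exp_le_exp.mpr
        have hSnn : 0 ≤ ∑ i, W j i ω :=
          Finset.sum_nonneg fun i _ => hW0 j i ω
        nlinarith [hlam0]
    have hchern : (P {ω | (∑ i, W j i) ω ≤ (n:ℝ) * (r/2)}).toReal
        ≤ Real.exp (-(-lam) * ((n:ℝ) * (r/2))) * mgf (∑ i, W j i) P (-lam) :=
      measure_le_le_exp_mul_mgf _ (neg_nonpos.mpr hlam0.le) hS_int
    rw [hiIndepW.mgf_sum (fun i => hWmeas j i) Finset.univ] at hchern
    have hprod : ∏ i, mgf (W j i) P (-lam) ≤ Real.exp (-(3*r/(8*M)) * n) := by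
      calc ∏ i, mgf (W j i) P (-lam) ≤ ∏ _i : Fin n, Real.exp (-(3*r/(8*M))) :=
            Finset.prod_le_prod (fun i _ => mgf_nonneg) (fun i _ => by
              rw [hmgf_i i]; exact hmgf0)
        _ = Real.exp (-(3*r/(8*M)) * n) := by
            rw [Finset.prod_const, Finset.card_univ, Fintype.card_fin,
              ← Real.exp_nat_mul]
            ring_nf
    have harith : -(-lam) * (n * (r/2)) + (-(3*r/(8*M)) * n) = -c' * n := by
      rw [hc'def, hlamdef]
      field_simp
      ring
    have hchern2 : (P {ω | (∑ i, W j i) ω ≤ n * (r/2)}).toReal ≤ Real.exp (-c' * n) := by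
      calc (P {ω | (∑ i, W j i) ω ≤ n * (r/2)}).toReal
          ≤ Real.exp (-(-lam) * (n * (r/2))) * ∏ i, mgf (W j i) P (-lam) := hchern
        _ ≤ Real.exp (-(-lam) * (n * (r/2))) * Real.exp (-(3*r/(8*M)) * n) :=
            mul_le_mul_of_nonneg_left hprod (Real.exp_pos _).le
        _ = Real.exp (-c' * n) := by rw [← Real.exp_add, harith]
    -- set inclusion
    have hsub : {ω | (1 / (n : ℝ)) * ∑ i, (X i ω j) ^ 2 * (if Q i ω < t₀ then 1 else 0)
        ≤ sigSq * t₀ / 2} ⊆ {ω | (∑ i, W j i) ω ≤ n * (r/2)} := by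
      intro ω hω
      simp only [mem_setOf_eq] at hω ⊢
      rw [Finset.sum_apply]
      have hZ : ∑ i, W j i ω ≤ ∑ i, (X i ω j)^2 * (if Q i ω < t₀ then 1 else 0) :=
        Finset.sum_le_sum fun i _ => hWle j i ω
      have h2 : ∑ i, (X i ω j)^2 * (if Q i ω < t₀ then 1 else 0) ≤ n * (r/2) := by
        have h3 : (n:ℝ) * ((1 / (n : ℝ)) * ∑ i, (X i ω j)^2 * (if Q i ω < t₀ then 1 else 0))
            = ∑ i, (X i ω j)^2 * (if Q i ω < t₀ then 1 else 0) := by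
          field_simp
        rw [← h3, hrdef]
        have := mul_le_mul_of_nonneg_left hω hnpos.le
        calc (n:ℝ) * ((1 / (n : ℝ)) * ∑ i, (X i ω j)^2 * (if Q i ω < t₀ then 1 else 0))
            ≤ n * (sigSq * t₀ / 2) := this
          _ = n * (sigSq * t₀ / 2) := rfl
      linarith
    calc P {ω | (1 / (n : ℝ)) * ∑ i, (X i ω j) ^ 2 * (if Q i ω < t₀ then 1 else 0)
          ≤ sigSq * t₀ / 2}
        ≤ P {ω | (∑ i, W j i) ω ≤ n * (r/2)} := measure_mono hsub
      _ ≤ ENNReal.ofReal (Real.exp (-c' * n)) := by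
          rw [← ENNReal.ofReal_toReal (measure_ne_top P _)]
          exact ENNReal.ofReal_le_ofReal hchern2
  -- union bound
  have hunion : {ω | ∃ j : Fin m,
      (1 / (n : ℝ)) * ∑ i, (X i ω j) ^ 2 * (if Q i ω < t₀ then 1 else 0)
        ≤ sigSq * t₀ / 2}
      = ⋃ j : Fin m, {ω | (1 / (n : ℝ)) * ∑ i, (X i ω j) ^ 2 * (if Q i ω < t₀ then 1 else 0)
        ≤ sigSq * t₀ / 2} := by
    ext ω; simp only [mem_setOf_eq, mem_iUnion]
  rw [hunion]
  calc P (⋃ j : Fin m, {ω | (1 / (n : ℝ)) * ∑ i, (X i ω j) ^ 2 * (if Q i ω < t₀ then 1 else 0)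
        ≤ sigSq * t₀ / 2})
      ≤ ∑' j : Fin m, P {ω | (1 / (n : ℝ)) * ∑ i, (X i ω j) ^ 2 *
          (if Q i ω < t₀ then 1 else 0) ≤ sigSq * t₀ / 2} := measure_iUnion_le _
    _ ≤ ∑' j : Fin m, ENNReal.ofReal (Real.exp (-c' * n)) :=
        ENNReal.tsum_le_tsum fun j => key j
    _ = (m : ENNReal) * ENNReal.ofReal (Real.exp (-c' * n)) := by
        rw [tsum_fintype]
        simp [Finset.sum_const, Finset.card_univ, nsmul_eq_mul]
    _ ≤ ENNReal.ofReal (2 * m * Real.exp (-c' * n)) := by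
        rw [show (2 * (m:ℝ) * Real.exp (-c' * n)) = (2 * m) * Real.exp (-c' * n) by ring,
          ENNReal.ofReal_mul (by positivity)]
        apply mul_le_mul_left
        calc (m : ENNReal) = ENNReal.ofReal (m : ℝ) := by
              rw [ENNReal.ofReal_natCast]
          _ ≤ ENNReal.ofReal (2 * m) := ENNReal.ofReal_le_ofReal
              (by have h : (0:ℝ) ≤ (m:ℝ) := Nat.cast_nonneg m; linarith)
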